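/- arXiv:2504.11646 — 2 statements merged into one kernel-verified Lean document; each statement's English description precedes it below -/
import Mathlib

section
/- Let S be the unit sphere of H, and for x ∈ S let H_x = (ℂx)^⊥ be the orthogonal complement of x, with p_x : H → H_x the orthogonal projection and i_x : H_x → H the inclusion. There exists a family of unitary (isometric linear) isomorphisms h(y,x) : H_x → H_y, defined for all x, y ∈ S, such that: (1) h(x,x) = id_{H_x} for every x ∈ S; (2) h(z,y) ∘ h(y,x) = h(z,x) for all x, y, z ∈ S; (3) the map S × S → B(H) sending (x,y) to the bounded operator i_y ∘ h(y,x) ∘ p_x on H is continuous in the operator norm topology. -/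
open ContinuousLinearMap
open scoped ENNReal ComplexConjugate

noncomputable section AuxStmt6

variable {H : Type*} [NormedAddCommGroup H] [InnerProductSpace ℂ H]

local notation "⟪" x ", " y "⟫" => @inner ℂ _ _ x y

/-! ### rank one operators -/

def rk (a b : H) : H →L[ℂ] H := (ContinuousLinearMap.smulRightL ℂ H H (innerSL ℂ b)) a

@[simp] lemma rk_apply (a b x : H) : rk a b x = ⟪b, x⟫ • a := rfl

lemma continuous_rk {X : Type*} [TopologicalSpace X] {a b : X → H}
    (ha : Continuous a) (hb : Continuous b) :
    Continuous fun x => rk (a x) (b x) := by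
  have h1 : Continuous fun x => (innerSL ℂ (b x)) := (innerSL ℂ).continuous.comp hb
  exact (ContinuousLinearMap.smulRightL ℂ H H).continuous₂.comp (h1.prodMk ha)

/-! ### abstract rotations -/

def gA (u w : H) (c σ : ℂ) : H →L[ℂ] H :=
  1 - rk u u - rk w w + rk (c • u + σ • w) u + rk ((starRingEnd ℂ) c • w - σ • u) w

def gB (u w : H) (c σ : ℂ) : H →L[ℂ] H :=
  1 - rk u u - rk w w + rk ((starRingEnd ℂ) c • u - σ • w) u + rk (σ • u + c • w) w

lemma gA_apply (u w : H) (c σ : ℂ) (x : H) :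
    gA u w c σ x = x - ⟪u, x⟫ • u - ⟪w, x⟫ • w + ⟪u, x⟫ • (c • u + σ • w)
      + ⟪w, x⟫ • ((starRingEnd ℂ) c • w - σ • u) := by
  simp [gA, ContinuousLinearMap.sub_apply, ContinuousLinearMap.add_apply]

lemma gB_apply (u w : H) (c σ : ℂ) (x : H) :
    gB u w c σ x = x - ⟪u, x⟫ • u - ⟪w, x⟫ • w + ⟪u, x⟫ • ((starRingEnd ℂ) c • u - σ • w)
      + ⟪w, x⟫ • (σ • u + c • w) := by
  simp [gB, ContinuousLinearMap.sub_apply, ContinuousLinearMap.add_apply]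

lemma continuous_gA {X : Type*} [TopologicalSpace X] {u w : X → H} {c σ : X → ℂ}
    (hu : Continuous u) (hw : Continuous w) (hc : Continuous c) (hσ : Continuous σ) :
    Continuous fun x => gA (u x) (w x) (c x) (σ x) := by
  unfold gA
  apply Continuous.add
  apply Continuous.add
  apply Continuous.sub
  apply Continuous.sub
  · exact continuous_const
  · exact continuous_rk hu hu
  · exact continuous_rk hw hw
  · exact continuous_rk ((hc.smul hu).add (hσ.smul hw)) hu
  · exact continuous_rk (((Complex.continuous_conj.comp hc).smul hw).sub (hσ.smul hu)) hw

lemma continuous_gB {X : Type*} [TopologicalSpace X] {u w : X → H} {c σ : X → ℂ}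
    (hu : Continuous u) (hw : Continuous w) (hc : Continuous c) (hσ : Continuous σ) :
    Continuous fun x => gB (u x) (w x) (c x) (σ x) := by
  unfold gB
  apply Continuous.add
  apply Continuous.add
  apply Continuous.sub
  apply Continuous.sub
  · exact continuous_const
  · exact continuous_rk hu hu
  · exact continuous_rk hw hw
  · exact continuous_rk (((Complex.continuous_conj.comp hc).smul hu).sub (hσ.smul hw)) hu
  · exact continuous_rk ((hσ.smul hu).add (hc.smul hw)) hw

section ident
variable {u w : H} {c σ : ℂ}

set_option linter.unreachableTactic false in
set_option linter.unusedTactic false in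
lemma gB_gA (huu : ⟪u, u⟫ = 1) (hww : ⟪w, w⟫ = 1)
    (huw : ⟪u, w⟫ = 0) (hwu : ⟪w, u⟫ = 0)
    (hcs : c * (starRingEnd ℂ) c + σ ^ 2 = 1) (x : H) :
    gB u w c σ (gA u w c σ x) = x := by
  rw [gA_apply, gB_apply]
  simp only [inner_add_right, inner_sub_right, inner_smul_right, huu, hww, huw, hwu,
    mul_zero, mul_one, zero_add, add_zero, sub_zero, zero_sub, mul_neg]
  match_scalars <;>
    first
      | ring1
      | linear_combination (-⟪u, x⟫ : ℂ) * hcs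
      | linear_combination (⟪w, x⟫ - ⟪u, x⟫ : ℂ) * hcs
      | linear_combination (-⟪w, x⟫ : ℂ) * hcs
      | linear_combination (⟪u, x⟫ - ⟪w, x⟫ : ℂ) * hcs
      | linear_combination (⟪u, x⟫ : ℂ) * hcs
      | linear_combination (⟪w, x⟫ : ℂ) * hcs
      | linear_combination (2 * ⟪w, x⟫ - ⟪u, x⟫ : ℂ) * hcs
      | linear_combination (2 * ⟪u, x⟫ - ⟪w, x⟫ : ℂ) * hcs

set_option linter.unreachableTactic false in
set_option linter.unusedTactic false in
lemma gA_gB (huu : ⟪u, u⟫ = 1) (hww : ⟪w, w⟫ = 1)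
    (huw : ⟪u, w⟫ = 0) (hwu : ⟪w, u⟫ = 0)
    (hcs : c * (starRingEnd ℂ) c + σ ^ 2 = 1) (x : H) :
    gA u w c σ (gB u w c σ x) = x := by
  rw [gB_apply, gA_apply]
  simp only [inner_add_right, inner_sub_right, inner_smul_right, huu, hww, huw, hwu,
    mul_zero, mul_one, zero_add, add_zero, sub_zero, zero_sub, mul_neg]
  match_scalars <;>
    first
      | ring1
      | linear_combination (-⟪u, x⟫ : ℂ) * hcs
      | linear_combination (⟪w, x⟫ - ⟪u, x⟫ : ℂ) * hcs
      | linear_combination (-⟪w, x⟫ : ℂ) * hcs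
      | linear_combination (⟪u, x⟫ - ⟪w, x⟫ : ℂ) * hcs
      | linear_combination (⟪u, x⟫ : ℂ) * hcs
      | linear_combination (⟪w, x⟫ : ℂ) * hcs
      | linear_combination (2 * ⟪w, x⟫ - ⟪u, x⟫ : ℂ) * hcs
      | linear_combination (2 * ⟪u, x⟫ - ⟪w, x⟫ : ℂ) * hcs

lemma gA_u (huu : ⟪u, u⟫ = 1) (hwu : ⟪w, u⟫ = 0) : gA u w c σ u = c • u + σ • w := by
  rw [gA_apply]
  rw [huu, hwu]; simp

lemma gA_inner (huu : ⟪u, u⟫ = 1) (hww : ⟪w, w⟫ = 1)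
    (huw : ⟪u, w⟫ = 0) (hwu : ⟪w, u⟫ = 0)
    (hcs : c * (starRingEnd ℂ) c + σ ^ 2 = 1) (hσ : (starRingEnd ℂ) σ = σ) (x : H) :
    ⟪gA u w c σ x, gA u w c σ x⟫ = ⟪x, x⟫ := by
  rw [gA_apply]
  simp only [inner_add_right, inner_sub_right, inner_smul_right, inner_add_left,
    inner_sub_left, inner_smul_left, huu, hww, huw, hwu, map_add, map_sub, map_mul,
    Complex.conj_conj, hσ, mul_zero, mul_one, zero_add, add_zero, sub_zero, zero_sub,
    mul_neg, zero_mul]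
  rw [← inner_conj_symm x u, ← inner_conj_symm x w]
  ring_nf
  linear_combination (⟪u, x⟫ * (starRingEnd ℂ) ⟪u, x⟫ + ⟪w, x⟫ * (starRingEnd ℂ) ⟪w, x⟫) * hcs

end ident

/-! ### concrete rotations -/

def wvec (u v : H) : H := ((‖v - ⟪u, v⟫ • u‖ : ℂ))⁻¹ • (v - ⟪u, v⟫ • u)

def rotACLM (u v : H) : H →L[ℂ] H := gA u (wvec u v) ⟪u, v⟫ (‖v - ⟪u, v⟫ • u‖ : ℂ)

def rotBCLM (u v : H) : H →L[ℂ] H := gB u (wvec u v) ⟪u, v⟫ (‖v - ⟪u, v⟫ • u‖ : ℂ)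

section facts
variable {u v : H}

lemma fact_huu (hu : ‖u‖ = 1) : ⟪u, u⟫ = 1 := by
  rw [inner_self_eq_norm_sq_to_K, hu]; norm_num

lemma hs_ne (hnd : v - ⟪u, v⟫ • u ≠ 0) : (‖v - ⟪u, v⟫ • u‖ : ℂ) ≠ 0 := by
  simpa using hnd

lemma wvec_spec (hnd : v - ⟪u, v⟫ • u ≠ 0) :
    v = ⟪u, v⟫ • u + (‖v - ⟪u, v⟫ • u‖ : ℂ) • wvec u v := by
  rw [wvec, smul_smul, mul_inv_cancel₀ (hs_ne hnd), one_smul]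
  abel

lemma fact_huw (hu : ‖u‖ = 1) : ⟪u, wvec u v⟫ = 0 := by
  rw [wvec, inner_smul_right, inner_sub_right, inner_smul_right, fact_huu hu]
  ring

lemma fact_hwu (hu : ‖u‖ = 1) : ⟪wvec u v, u⟫ = 0 := by
  rw [← inner_conj_symm, fact_huw hu, map_zero]

lemma fact_hww (hnd : v - ⟪u, v⟫ • u ≠ 0) : ⟪wvec u v, wvec u v⟫ = 1 := by
  have hs := hs_ne hnd
  rw [wvec, inner_smul_right, inner_smul_left, inner_self_eq_norm_sq_to_K]
  rw [map_inv₀, Complex.conj_ofReal]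
  field_simp
  rfl

lemma fact_hcs (hu : ‖u‖ = 1) (hv : ‖v‖ = 1) :
    ⟪u, v⟫ * (starRingEnd ℂ) ⟪u, v⟫ + ((‖v - ⟪u, v⟫ • u‖ : ℂ)) ^ 2 = 1 := by
  have h1 : ⟪v - ⟪u, v⟫ • u, v - ⟪u, v⟫ • u⟫ = 1 - ⟪u, v⟫ * (starRingEnd ℂ) ⟪u, v⟫ := by
    rw [inner_sub_left, inner_sub_right, inner_sub_right, inner_smul_left, inner_smul_right,
      inner_smul_left, inner_smul_right, fact_huu hu, inner_self_eq_norm_sq_to_K v, hv,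
      ← inner_conj_symm v u]
    push_cast
    ring
  have h2 : ⟪v - ⟪u, v⟫ • u, v - ⟪u, v⟫ • u⟫ = ((‖v - ⟪u, v⟫ • u‖ : ℂ)) ^ 2 :=
    inner_self_eq_norm_sq_to_K _
  rw [h2] at h1
  linear_combination h1

end facts

lemma sq_norm_aux {a b : ℝ} (ha : 0 ≤ a) (hb : 0 ≤ b) (h : a ^ (2:ℕ) = b ^ (2:ℕ)) : a = b := by
  have h3 := (sq_eq_sq_iff_abs_eq_abs a b).mp h
  rwa [abs_of_nonneg ha, abs_of_nonneg hb] at h3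

def rotE (u v : H) (hu : ‖u‖ = 1) (hv : ‖v‖ = 1) (hnd : v - ⟪u, v⟫ • u ≠ 0) :
    H ≃ₗᵢ[ℂ] H where
  toFun := rotACLM u v
  invFun := rotBCLM u v
  map_add' := (rotACLM u v).map_add
  map_smul' := (rotACLM u v).map_smul
  left_inv x := gB_gA (fact_huu hu) (fact_hww hnd) (fact_huw hu) (fact_hwu hu)
    (fact_hcs hu hv) x
  right_inv x := gA_gB (fact_huu hu) (fact_hww hnd) (fact_huw hu) (fact_hwu hu)
    (fact_hcs hu hv) x
  norm_map' x := by
    have h := gA_inner (fact_huu hu) (fact_hww hnd) (fact_huw hu) (fact_hwu hu)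
      (fact_hcs hu hv) (Complex.conj_ofReal _) x
    rw [inner_self_eq_norm_sq_to_K, inner_self_eq_norm_sq_to_K] at h
    have h2 : ‖gA u (wvec u v) ⟪u, v⟫ ((‖v - ⟪u, v⟫ • u‖ : ℂ)) x‖ ^ (2:ℕ) = ‖x‖ ^ (2:ℕ) := by
      exact_mod_cast h
    exact sq_norm_aux (norm_nonneg _) (norm_nonneg _) h2

@[simp] lemma rotE_coe (u v : H) (hu hv hnd) :
    ⇑(rotE (H := H) u v hu hv hnd) = ⇑(rotACLM u v) := rfl

@[simp] lemma rotE_symm_coe (u v : H) (hu hv hnd) :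
    ⇑((rotE (H := H) u v hu hv hnd).symm) = ⇑(rotBCLM u v) := rfl

lemma rotE_apply_u (u v : H) (hu hv hnd) : rotE (H := H) u v hu hv hnd u = v := by
  show rotACLM u v u = v
  rw [rotACLM, gA_u (fact_huu hu) (fact_hwu hu), ← wvec_spec hnd]

lemma continuous_rotACLM {X : Type*} [TopologicalSpace X] {f g : X → H}
    (hf : Continuous f) (hg : Continuous g) (hnd : ∀ x, g x - ⟪f x, g x⟫ • f x ≠ 0) :
    Continuous fun x => rotACLM (f x) (g x) := by
  have hc : Continuous fun x => (⟪f x, g x⟫ : ℂ) := hf.inner hg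
  have hd : Continuous fun x => g x - ⟪f x, g x⟫ • f x := hg.sub (hc.smul hf)
  have hn : Continuous fun x => ((‖g x - ⟪f x, g x⟫ • f x‖ : ℝ) : ℂ) :=
    Complex.continuous_ofReal.comp hd.norm
  have hw : Continuous fun x => wvec (f x) (g x) := by
    unfold wvec
    exact (hn.inv₀ fun x => hs_ne (hnd x)).smul hd
  exact continuous_gA hf hw hc hn

lemma continuous_rotBCLM {X : Type*} [TopologicalSpace X] {f g : X → H}
    (hf : Continuous f) (hg : Continuous g) (hnd : ∀ x, g x - ⟪f x, g x⟫ • f x ≠ 0) :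
    Continuous fun x => rotBCLM (f x) (g x) := by
  have hc : Continuous fun x => (⟪f x, g x⟫ : ℂ) := hf.inner hg
  have hd : Continuous fun x => g x - ⟪f x, g x⟫ • f x := hg.sub (hc.smul hf)
  have hn : Continuous fun x => ((‖g x - ⟪f x, g x⟫ • f x‖ : ℝ) : ℂ) :=
    Complex.continuous_ofReal.comp hd.norm
  have hw : Continuous fun x => wvec (f x) (g x) := by
    unfold wvec
    exact (hn.inv₀ fun x => hs_ne (hnd x)).smul hd
  exact continuous_gB hf hw hc hn


lemma sq_norm_aux' {a b : ℝ} (ha : 0 ≤ a) (hb : 0 ≤ b) (h : a ^ (2:ℝ) = b ^ (2:ℝ)) : a = b := by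
  have h2 : a ^ (2:ℕ) = b ^ (2:ℕ) := by
    rw [← Real.rpow_natCast a 2, ← Real.rpow_natCast b 2]; exact_mod_cast h
  have h3 := (sq_eq_sq_iff_abs_eq_abs a b).mp h2
  rwa [abs_of_nonneg ha, abs_of_nonneg hb] at h3

section shift
variable {ι : Type*} {J : ι → ι}

lemma shift_summable (hJ : Function.Injective J) (f : ι → ℂ)
    (hf : Summable fun i => ‖f i‖ ^ (2:ℝ)) :
    Summable fun i => ‖Function.extend J f 0 i‖ ^ (2:ℝ) := by
  rw [← hJ.summable_iff (f := fun i => ‖Function.extend J f 0 i‖ ^ (2:ℝ))]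
  · apply hf.congr
    intro i
    rw [Function.comp_apply, hJ.extend_apply]
  · intro x hx
    rw [Function.extend_apply' _ _ _ (by simpa [Set.range] using hx)]
    simp [Real.zero_rpow]

lemma shift_tsum (hJ : Function.Injective J) (f : ι → ℂ) :
    (∑' i, ‖Function.extend J f 0 i‖ ^ (2:ℝ)) = ∑' i, ‖f i‖ ^ (2:ℝ) := by
  rw [← hJ.tsum_eq]
  · apply tsum_congr
    intro i
    rw [hJ.extend_apply]
  · intro x hx
    rw [Function.mem_support] at hx
    by_contra hR
    apply hx
    rw [Function.extend_apply' _ _ _ (by simpa [Set.range] using hR)]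
    simp [Real.zero_rpow]

lemma two_toReal : (0:ℝ) < (2:ℝ≥0∞).toReal := by norm_num

def shiftElt (hJ : Function.Injective J) (f : lp (fun _ : ι => ℂ) 2) :
    lp (fun _ : ι => ℂ) 2 :=
  ⟨Function.extend J (⇑f) 0, by
    apply memℓp_gen
    rw [ENNReal.toReal_ofNat]
    exact shift_summable hJ _ (by
      have := (memℓp_gen_iff two_toReal).mp (lp.memℓp f)
      rwa [ENNReal.toReal_ofNat] at this)⟩

@[simp] lemma coe_shiftElt (hJ : Function.Injective J) (f : lp (fun _ : ι => ℂ) 2) :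
    ⇑(shiftElt hJ f) = Function.extend J (⇑f) 0 := rfl

lemma norm_shiftElt (hJ : Function.Injective J) (f : lp (fun _ : ι => ℂ) 2) :
    ‖shiftElt hJ f‖ = ‖f‖ := by
  apply sq_norm_aux' (norm_nonneg _) (norm_nonneg _)
  have h1 := lp.norm_rpow_eq_tsum two_toReal f
  have h2 := lp.norm_rpow_eq_tsum two_toReal (shiftElt hJ f)
  rw [ENNReal.toReal_ofNat] at h1 h2
  rw [h1, h2, coe_shiftElt]
  exact shift_tsum hJ _

def shiftL (hJ : Function.Injective J) :
    lp (fun _ : ι => ℂ) 2 →ₗᵢ[ℂ] lp (fun _ : ι => ℂ) 2 where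
  toFun f := shiftElt hJ f
  map_add' f g := by
    ext x
    simp only [lp.coeFn_add, Pi.add_apply, coe_shiftElt]
    rcases em (∃ i, J i = x) with ⟨i, rfl⟩ | hx
    · rw [hJ.extend_apply, hJ.extend_apply, hJ.extend_apply]
      simp
    · rw [Function.extend_apply' _ _ _ hx, Function.extend_apply' _ _ _ hx,
        Function.extend_apply' _ _ _ hx]
      simp
  map_smul' c f := by
    ext x
    simp only [lp.coeFn_smul, Pi.smul_apply, coe_shiftElt]
    rcases em (∃ i, J i = x) with ⟨i, rfl⟩ | hx
    · rw [hJ.extend_apply, hJ.extend_apply]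
      simp
    · rw [Function.extend_apply' _ _ _ hx, Function.extend_apply' _ _ _ hx]
      simp
  norm_map' f := norm_shiftElt hJ f

@[simp] lemma shiftL_apply (hJ : Function.Injective J) (f : lp (fun _ : ι => ℂ) 2) :
    shiftL hJ f = shiftElt hJ f := rfl

end shift

/-- main existence of the "shift vector field". -/
lemma exists_sigma [CompleteSpace H] [TopologicalSpace.SeparableSpace H]
    (hinf : ¬FiniteDimensional ℂ H) :
    ∃ (e₀ : H) (σ : H → H), ‖e₀‖ = 1 ∧ Continuous σ ∧
      (∀ x : H, ‖σ x‖ = ‖x‖) ∧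
      (∀ x : H, ⟪e₀, σ x⟫ = 0) ∧
      (∀ (x : H) (c : ℂ), ‖x‖ = 1 → σ x ≠ c • x) := by
  classical
  obtain ⟨w, b, hb⟩ := exists_hilbertBasis ℂ H
  -- the index set is countable
  have horm : Orthonormal ℂ ((↑) : w → H) := by rw [← hb]; exact b.orthonormal
  have hdist : ∀ i j : w, i ≠ j → (1:ℝ) ≤ ‖(i : H) - (j : H)‖ := by
    intro i j hij
    have h2 : ‖(i : H) - (j : H)‖ ^ 2 = 2 := by
      rw [@norm_sub_sq ℂ]
      rw [horm.2 hij]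
      rw [horm.1 i, horm.1 j]
      norm_num
    nlinarith [norm_nonneg ((i : H) - (j : H))]
  have hcw : Countable ↥w := by
    have hdisj : (Set.univ : Set ↥w).PairwiseDisjoint
        (fun i : ↥w => Metric.ball (i : H) 2⁻¹) := by
      intro i _ j _ hij
      apply Metric.ball_disjoint_ball
      rw [dist_eq_norm]
      calc (2:ℝ)⁻¹ + 2⁻¹ = 1 := by norm_num
      _ ≤ ‖(i : H) - (j : H)‖ := hdist i j hij
    have hcu := hdisj.countable_of_nonempty_interior (fun i _ => by
      rw [interior_eq_iff_isOpen.mpr Metric.isOpen_ball]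
      exact Metric.nonempty_ball.mpr (by norm_num))
    exact Set.countable_univ_iff.mp hcu
  have hiw : Infinite ↥w := by
    by_contra hfin
    rw [not_infinite_iff_finite] at hfin
    apply hinf
    have hwf : w.Finite := Set.finite_coe_iff.mp hfin
    have hd := b.dense_span
    rw [hb, Subtype.range_coe] at hd
    have hfd : FiniteDimensional ℂ (Submodule.span ℂ w) := FiniteDimensional.span_of_finite ℂ hwf
    have hclosed : IsClosed ((Submodule.span ℂ w : Submodule ℂ H) : Set H) :=
      Submodule.closed_of_finiteDimensional _
    rw [hclosed.submodule_topologicalClosure_eq] at hd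
    rw [hd] at hfd
    exact Module.finite_def.mpr ((Submodule.fg_top _).mp (Module.finite_def.mp hfd))
  -- a denumerable structure
  obtain ⟨den⟩ := nonempty_denumerable_iff.mpr ⟨hcw, hiw⟩
  let e : ↥w ≃ ℕ := Denumerable.eqv ↥w
  let J : ↥w → ↥w := fun i => e.symm (e i + 1)
  have hJ : Function.Injective J := by
    intro i j hij
    have := congrArg e hij
    simp only [J, Equiv.apply_symm_apply] at this
    exact e.injective (by omega)
  have hJr : ∀ i, J i ≠ e.symm 0 := by
    intro i hcon
    have := congrArg e hcon
    simp [J] at this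
  -- definitions
  set e₀ : H := b (e.symm 0) with he₀def
  set σ : H → H := fun x => b.repr.symm (shiftL hJ (b.repr x)) with hσdef
  have hrepr : ∀ x : H, b.repr (σ x) = shiftL hJ (b.repr x) := by
    intro x
    rw [hσdef]
    simp
  refine ⟨e₀, σ, ?_, ?_, ?_, ?_, ?_⟩
  · exact b.orthonormal.1 (e.symm 0)
  · exact b.repr.symm.continuous.comp ((shiftL hJ).continuous.comp b.repr.continuous)
  · intro x
    have h1 : ‖σ x‖ = ‖shiftL hJ (b.repr x)‖ := by
      rw [hσdef]
      exact b.repr.symm.norm_map _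
    rw [h1, (shiftL hJ).norm_map, b.repr.norm_map]
  · intro x
    have h1 : ⟪e₀, σ x⟫ = b.repr (σ x) (e.symm 0) := (b.repr_apply_apply (σ x) (e.symm 0)).symm
    rw [h1, hrepr]
    show Function.extend J (⇑(b.repr x)) 0 (e.symm 0) = 0
    rw [Function.extend_apply' _ _ _ (by
      rintro ⟨i, hi⟩
      exact hJr i hi)]
    rfl
  · intro x c hx hcon
    have hfx : shiftL hJ (b.repr x) = c • (b.repr x) := by
      rw [← hrepr, hcon]
      simp
    have happ : ∀ i, Function.extend J (⇑(b.repr x)) 0 i = c * (b.repr x) i := by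
      intro i
      have := congrArg (fun g : lp (fun _ : ↥w => ℂ) 2 => (g : ↥w → ℂ) i) hfx
      simpa [shiftL_apply, coe_shiftElt] using this
    have hc0 : ∀ i, (b.repr x) i = 0 := by
      rcases eq_or_ne c 0 with rfl | hcne
      · intro i
        have := happ (J i)
        rw [hJ.extend_apply] at this
        simpa using this
      · have hnat : ∀ n : ℕ, (b.repr x) (e.symm n) = 0 := by
          intro n
          induction n with
          | zero =>
            have := happ (e.symm 0)
            rw [Function.extend_apply' _ _ _ (by
              rintro ⟨i, hi⟩
              exact hJr i hi)] at this
            have h0 : c * (b.repr x) (e.symm 0) = 0 := this.symm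
            exact (mul_eq_zero.mp h0).resolve_left hcne
          | succ n ih =>
            have hJn : J (e.symm n) = e.symm (n+1) := by
              simp [J]
            have := happ (e.symm (n+1))
            rw [← hJn, hJ.extend_apply, hJn, ih] at this
            have h0 : c * (b.repr x) (e.symm (n+1)) = 0 := this.symm
            exact (mul_eq_zero.mp h0).resolve_left hcne
        intro i
        have := hnat (e i)
        simpa using this
    have hxz : b.repr x = 0 := by
      ext i
      simpa using hc0 i
    have : x = 0 := by
      have := congrArg b.repr.symm hxz
      simpa using this
    rw [this] at hx
    simp at hx




def restrE (U : H ≃ₗᵢ[ℂ] H) (K L : Submodule ℂ H)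
    (hKL : ∀ v ∈ K, U v ∈ L) (hLK : ∀ v ∈ L, U.symm v ∈ K) : K ≃ₗᵢ[ℂ] L where
  toFun v := ⟨U v, hKL v v.2⟩
  invFun v := ⟨U.symm v, hLK v v.2⟩
  map_add' a b := by ext; simp
  map_smul' c a := by ext; simp
  left_inv a := by ext; simp
  right_inv a := by ext; simp
  norm_map' a := U.norm_map a

@[simp] lemma restrE_apply_coe (U : H ≃ₗᵢ[ℂ] H) (K L : Submodule ℂ H) (h1 h2) (a : K) :
    (restrE U K L h1 h2 a : H) = U a := rfl

@[simp] lemma restrE_symm_apply_coe (U : H ≃ₗᵢ[ℂ] H) (K L : Submodule ℂ H) (h1 h2) (a : L) :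
    ((restrE U K L h1 h2).symm a : H) = U.symm a := rfl

lemma maps_compl (U : H ≃ₗᵢ[ℂ] H) {a b : H} (h : U a = b) :
    ∀ v ∈ (Submodule.span ℂ {a})ᗮ, U v ∈ (Submodule.span ℂ {b})ᗮ := by
  intro v hv
  rw [Submodule.mem_orthogonal_singleton_iff_inner_right] at hv ⊢
  calc ⟪b, U v⟫ = ⟪U a, U v⟫ := by rw [h]
  _ = ⟪a, v⟫ := U.inner_map_map a v
  _ = 0 := hv

lemma maps_compl_symm (U : H ≃ₗᵢ[ℂ] H) {a b : H} (h : U a = b) :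
    ∀ v ∈ (Submodule.span ℂ {b})ᗮ, U.symm v ∈ (Submodule.span ℂ {a})ᗮ := by
  have ha : U.symm b = a := by rw [← h]; exact U.symm_apply_apply a
  exact maps_compl U.symm ha

lemma proj_comm [CompleteSpace H] (U : H ≃ₗᵢ[ℂ] H) {a b : H} (h : U a = b) (v : H) :
    U.symm ((Submodule.orthogonalProjectionOnto (Submodule.span ℂ {b})ᗮ v : H)) =
      (Submodule.orthogonalProjectionOnto (Submodule.span ℂ {a})ᗮ (U.symm v) : H) := by
  symm
  apply Submodule.eq_starProjection_of_mem_orthogonal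
  · exact maps_compl_symm U h _ (SetLike.coe_mem _)
  · rw [Submodule.orthogonal_orthogonal]
    have hmem : v - (Submodule.orthogonalProjectionOnto (Submodule.span ℂ {b})ᗮ v : H)
        ∈ (Submodule.span ℂ {b})ᗮᗮ := Submodule.sub_starProjection_mem_orthogonal v
    rw [Submodule.orthogonal_orthogonal] at hmem
    obtain ⟨t, ht⟩ := Submodule.mem_span_singleton.mp hmem
    have : U.symm v - U.symm ((Submodule.orthogonalProjectionOnto (Submodule.span ℂ {b})ᗮ v : H))
        = U.symm (v - (Submodule.orthogonalProjectionOnto (Submodule.span ℂ {b})ᗮ v : H)) := by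
      rw [map_sub]
    rw [this, ← ht, map_smul]
    have ha : U.symm b = a := by rw [← h]; exact U.symm_apply_apply a
    rw [ha]
    exact Submodule.mem_span_singleton.mpr ⟨t, rfl⟩



theorem stmt6_aux [CompleteSpace H] (e₀ : H) (σ : H → H) (he₀ : ‖e₀‖ = 1)
    (hσc : Continuous σ) (hσn : ∀ x, ‖σ x‖ = ‖x‖) (hσe : ∀ x, ⟪e₀, σ x⟫ = 0)
    (hσi : ∀ (x : H) (c : ℂ), ‖x‖ = 1 → σ x ≠ c • x) :
    ∃ h : ∀ x y : Metric.sphere (0 : H) 1,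
        ((Submodule.span ℂ {(x : H)})ᗮ ≃ₗᵢ[ℂ] (Submodule.span ℂ {(y : H)})ᗮ),
      (∀ x, h x x = LinearIsometryEquiv.refl ℂ _) ∧
      (∀ x y z, (h x y).trans (h y z) = h x z) ∧
      Continuous (fun p : Metric.sphere (0 : H) 1 × Metric.sphere (0 : H) 1 =>
        ((Submodule.span ℂ {(p.2 : H)})ᗮ).subtypeL ∘L
          (h p.1 p.2).toLinearIsometry.toContinuousLinearMap ∘L
          Submodule.orthogonalProjectionOnto (Submodule.span ℂ {(p.1 : H)})ᗮ) := by
  classical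
  have hx1 : ∀ x : Metric.sphere (0 : H) 1, ‖(x : H)‖ = 1 := fun x =>
    mem_sphere_zero_iff_norm.mp x.2
  have hσn1 : ∀ x : Metric.sphere (0 : H) 1, ‖σ (x : H)‖ = 1 := fun x => by
    rw [hσn]; exact hx1 x
  have hnd1 : ∀ x : Metric.sphere (0 : H) 1, σ (x : H) - ⟪e₀, σ (x : H)⟫ • e₀ ≠ 0 := by
    intro x
    rw [hσe, zero_smul, sub_zero]
    intro hcon
    have := hσn1 x
    rw [hcon] at this
    norm_num at this
  have hnd2 : ∀ x : Metric.sphere (0 : H) 1,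
      (x : H) - ⟪σ (x : H), (x : H)⟫ • σ (x : H) ≠ 0 := by
    intro x hcon
    rw [sub_eq_zero] at hcon
    have hcne : ⟪σ (x : H), (x : H)⟫ ≠ 0 := by
      intro h0
      rw [h0, zero_smul] at hcon
      have := hx1 x
      rw [hcon] at this
      norm_num at this
    apply hσi x (⟪σ (x : H), (x : H)⟫)⁻¹ (hx1 x)
    calc σ (x : H) = (⟪σ (x : H), (x : H)⟫)⁻¹ • (⟪σ (x : H), (x : H)⟫ • σ (x : H)) := by
          rw [smul_smul, inv_mul_cancel₀ hcne, one_smul]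
    _ = (⟪σ (x : H), (x : H)⟫)⁻¹ • (x : H) := by rw [← hcon]
  let U : Metric.sphere (0 : H) 1 → (H ≃ₗᵢ[ℂ] H) := fun x =>
    (rotE e₀ (σ x) he₀ (hσn1 x) (hnd1 x)).trans
      (rotE (σ x) x (hσn1 x) (hx1 x) (hnd2 x))
  have hU : ∀ x : Metric.sphere (0 : H) 1, U x e₀ = (x : H) := by
    intro x
    show rotE (σ x) (x : H) (hσn1 x) (hx1 x) (hnd2 x)
      (rotE e₀ (σ x) he₀ (hσn1 x) (hnd1 x) e₀) = (x : H)
    rw [rotE_apply_u, rotE_apply_u]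
  refine ⟨fun x y =>
    (restrE (U x) ((Submodule.span ℂ {e₀})ᗮ) ((Submodule.span ℂ {(x : H)})ᗮ)
      (maps_compl (U x) (hU x)) (maps_compl_symm (U x) (hU x))).symm.trans
    (restrE (U y) ((Submodule.span ℂ {e₀})ᗮ) ((Submodule.span ℂ {(y : H)})ᗮ)
      (maps_compl (U y) (hU y)) (maps_compl_symm (U y) (hU y))), ?_, ?_, ?_⟩
  · intro x
    apply LinearIsometryEquiv.ext
    intro v
    simp [LinearIsometryEquiv.trans_apply]
  · intro x y z
    apply LinearIsometryEquiv.ext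
    intro v
    simp [LinearIsometryEquiv.trans_apply]
  · have key : (fun p : Metric.sphere (0 : H) 1 × Metric.sphere (0 : H) 1 =>
        ((Submodule.span ℂ {(p.2 : H)})ᗮ).subtypeL ∘L
          (((restrE (U p.1) ((Submodule.span ℂ {e₀})ᗮ) ((Submodule.span ℂ {(p.1 : H)})ᗮ)
            (maps_compl (U p.1) (hU p.1)) (maps_compl_symm (U p.1) (hU p.1))).symm.trans
          (restrE (U p.2) ((Submodule.span ℂ {e₀})ᗮ) ((Submodule.span ℂ {(p.2 : H)})ᗮ)
            (maps_compl (U p.2) (hU p.2))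
            (maps_compl_symm (U p.2) (hU p.2)))).toLinearIsometry.toContinuousLinearMap) ∘L
          Submodule.orthogonalProjectionOnto (Submodule.span ℂ {(p.1 : H)})ᗮ)
        = fun p => (rotACLM (σ (p.2 : H)) (p.2 : H) ∘L rotACLM e₀ (σ (p.2 : H))) ∘L
            ((((Submodule.span ℂ {e₀})ᗮ).subtypeL ∘L
              Submodule.orthogonalProjectionOnto ((Submodule.span ℂ {e₀})ᗮ)) ∘L
             (rotBCLM e₀ (σ (p.1 : H)) ∘L rotBCLM (σ (p.1 : H)) (p.1 : H))) := by
      funext p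
      apply ContinuousLinearMap.ext
      intro v
      have hUsymm : ∀ (x : Metric.sphere (0 : H) 1) (a : H),
          (U x).symm a = rotBCLM e₀ (σ (x : H)) (rotBCLM (σ (x : H)) (x : H) a) := fun x a => rfl
      have hUapp : ∀ (x : Metric.sphere (0 : H) 1) (a : H),
          (U x) a = rotACLM (σ (x : H)) (x : H) (rotACLM e₀ (σ (x : H)) a) := fun x a => rfl
      simp only [ContinuousLinearMap.coe_comp', Function.comp_apply, Submodule.subtypeL_apply,
        LinearIsometry.coe_toContinuousLinearMap, LinearIsometryEquiv.coe_toLinearIsometry,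
        LinearIsometryEquiv.trans_apply, restrE_apply_coe, restrE_symm_apply_coe]
      rw [proj_comm (U p.1) (hU p.1) v]
      rfl
    rw [key]
    have hcoe : Continuous (fun x : Metric.sphere (0 : H) 1 => (x : H)) :=
      continuous_subtype_val
    have hσS : Continuous (fun x : Metric.sphere (0 : H) 1 => σ (x : H)) := hσc.comp hcoe
    have hA2 : Continuous fun x : Metric.sphere (0 : H) 1 =>
        rotACLM (σ (x : H)) (x : H) := continuous_rotACLM hσS hcoe hnd2
    have hA1 : Continuous fun x : Metric.sphere (0 : H) 1 =>
        rotACLM e₀ (σ (x : H)) := continuous_rotACLM continuous_const hσS hnd1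
    have hB1 : Continuous fun x : Metric.sphere (0 : H) 1 =>
        rotBCLM e₀ (σ (x : H)) := continuous_rotBCLM continuous_const hσS hnd1
    have hB2 : Continuous fun x : Metric.sphere (0 : H) 1 =>
        rotBCLM (σ (x : H)) (x : H) := continuous_rotBCLM hσS hcoe hnd2
    exact ((hA2.comp continuous_snd).clm_comp (hA1.comp continuous_snd)).clm_comp
      (Continuous.clm_comp continuous_const
        ((hB1.comp continuous_fst).clm_comp (hB2.comp continuous_fst)))

end AuxStmt6


/-- There exists a transitive system of unitary isomorphisms `h(y,x) : H_x → H_y` between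
the orthogonal complements of the points of the unit sphere, such that
`(x, y) ↦ i_y ∘ h(y,x) ∘ p_x` is norm continuous.  (Here `h x y : H_x ≃ H_y` denotes
`h(y,x)`.) -/
theorem stmt6 {H : Type*} [NormedAddCommGroup H] [InnerProductSpace ℂ H]
    [CompleteSpace H] [TopologicalSpace.SeparableSpace H]
    (hinf : ¬FiniteDimensional ℂ H) :
    ∃ h : ∀ x y : Metric.sphere (0 : H) 1,
        ((Submodule.span ℂ {(x : H)})ᗮ ≃ₗᵢ[ℂ] (Submodule.span ℂ {(y : H)})ᗮ),
      (∀ x, h x x = LinearIsometryEquiv.refl ℂ _) ∧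
      (∀ x y z, (h x y).trans (h y z) = h x z) ∧
      Continuous (fun p : Metric.sphere (0 : H) 1 × Metric.sphere (0 : H) 1 =>
        ((Submodule.span ℂ {(p.2 : H)})ᗮ).subtypeL ∘L
          (h p.1 p.2).toLinearIsometry.toContinuousLinearMap ∘L
          Submodule.orthogonalProjectionOnto (Submodule.span ℂ {(p.1 : H)})ᗮ) := by
  obtain ⟨e₀, σ, he₀, hσc, hσn, hσe, hσi⟩ := exists_sigma hinf
  exact stmt6_aux e₀ σ he₀ hσc hσn hσe hσi
end

section
/- Let (u_t)_{t ∈ (0,1]} be a family of bounded operators on H with u_t* u_t = id_H, with u₁ = id_H, t ↦ u_t operator-norm continuous on (0,1), and u_t → id_H strongly as t → 1. Let (v_t)_{t ∈ [0,1)} be a family of bounded operators on H with v_t* v_t = id_H, with v₀ = id_H, t ↦ v_t operator-norm continuous on (0,1), and v_t → id_H strongly as t → 0. Let K(H) be the compact operators on H with the operator norm. Then the map K(H) × [0,1] × K(H) → K(H) defined by (A,t,B) ↦ t·(u_t A u_t*) + (1−t)·(v_t B v_t*) for t ∈ (0,1), (A,0,B) ↦ B, and (A,1,B) ↦ A, is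 jointly continuous in the operator norm; it is a canonical homotopy between any two compact operators A and B depending continuously on A and B. -/
open Filter Topology ContinuousLinearMap Metric Set

set_option maxHeartbeats 1000000

section Aux

variable {H : Type*} [NormedAddCommGroup H] [InnerProductSpace ℂ H] [CompleteSpace H]

private lemma isom_norm_apply {w : H →L[ℂ] H} (hw : adjoint w ∘L w = 1) (x : H) :
    ‖w x‖ = ‖x‖ := by
  have h0 : adjoint w (w x) = x := by
    have := congrArg (fun T : H →L[ℂ] H => T x) hw
    simpa using this
  have h1 : (inner ℂ (w x) (w x) : ℂ) = inner ℂ x x := by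
    have h2 := adjoint_inner_left w x (w x)
    rw [h0] at h2
    exact h2.symm
  rw [norm_eq_sqrt_re_inner (𝕜 := ℂ), norm_eq_sqrt_re_inner (𝕜 := ℂ), h1]

private lemma isom_norm_le {w : H →L[ℂ] H} (hw : adjoint w ∘L w = 1) : ‖w‖ ≤ 1 :=
  opNorm_le_bound _ zero_le_one fun x => by rw [isom_norm_apply hw, one_mul]

private lemma isom_adjoint_norm_le {w : H →L[ℂ] H} (hw : adjoint w ∘L w = 1) :
    ‖adjoint w‖ ≤ 1 := by
  rw [LinearIsometryEquiv.norm_map]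
  exact isom_norm_le hw

private lemma adj_dist (A : H →L[ℂ] H) (x y : H) :
    ‖adjoint A x - adjoint A y‖ ^ 2 ≤ ‖(A ∘L adjoint A) x - (A ∘L adjoint A) y‖ * ‖x - y‖ := by
  have h1 : ‖adjoint A x - adjoint A y‖ ^ 2
      = RCLike.re (inner ℂ (adjoint A (x - y)) (adjoint A (x - y)) : ℂ) := by
    rw [← norm_sq_eq_re_inner (𝕜 := ℂ), map_sub]
  have h2 : (inner ℂ (adjoint A (x - y)) (adjoint A (x - y)) : ℂ)
      = inner ℂ (x - y) (A (adjoint A (x - y))) := adjoint_inner_left A (adjoint A (x - y)) (x - y)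
  have h3 : RCLike.re (inner ℂ (x - y) (A (adjoint A (x - y))) : ℂ)
      ≤ ‖(A ∘L adjoint A) (x - y)‖ * ‖x - y‖ := by
    calc RCLike.re (inner ℂ (x - y) (A (adjoint A (x - y))) : ℂ)
        ≤ ‖(inner ℂ (x - y) (A (adjoint A (x - y))) : ℂ)‖ := RCLike.re_le_norm _
      _ ≤ ‖x - y‖ * ‖A (adjoint A (x - y))‖ := norm_inner_le_norm _ _
      _ = ‖(A ∘L adjoint A) (x - y)‖ * ‖x - y‖ := by
          rw [mul_comm]; rfl
  have h4 : (A ∘L adjoint A) (x - y) = (A ∘L adjoint A) x - (A ∘L adjoint A) y := map_sub _ _ _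
  rw [h1, h2]
  rw [h4] at h3
  exact h3

/-- Schauder's theorem in Hilbert space: the adjoint of a compact operator is compact. -/
private lemma schauder {A : H →L[ℂ] H} (hA : IsCompactOperator (⇑A)) :
    IsCompactOperator (⇑(adjoint A)) := by
  set T := adjoint A with hT
  have hAA : IsCompactOperator (⇑((A ∘L T).toLinearMap)) := by
    have : IsCompactOperator (⇑A ∘ ⇑T) := hA.comp_clm T
    exact this
  have tb : TotallyBounded ((⇑T) '' closedBall (0 : H) 1) := by
    rw [Metric.totallyBounded_iff]
    intro ε hε
    have tbAA : TotallyBounded ((⇑((A ∘L T).toLinearMap)) '' closedBall (0 : H) 1) :=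
      (hAA.isCompact_closure_image_closedBall 1).totallyBounded.subset subset_closure
    obtain ⟨t, hts, htf, htc⟩ := totallyBounded_iff_subset.mp tbAA
      {p : H × H | dist p.1 p.2 < ε ^ 2 / 4} (Metric.dist_mem_uniformity (by positivity))
    classical
    have hchoice : ∀ y ∈ (⇑((A ∘L T).toLinearMap)) '' closedBall (0 : H) 1,
        ∃ x, x ∈ closedBall (0 : H) 1 ∧ (A ∘L T) x = y := fun y hy => by
      obtain ⟨x, hx, hxy⟩ := hy; exact ⟨x, hx, hxy⟩
    choose! c hc1 hc2 using hchoice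
    refine ⟨(fun y => T (c y)) '' t, htf.image _, ?_⟩
    rintro p ⟨x, hx, rfl⟩
    have hmem : (A ∘L T) x ∈ (⇑((A ∘L T).toLinearMap)) '' closedBall (0 : H) 1 :=
      mem_image_of_mem _ hx
    obtain ⟨y, hyt, hyd⟩ := mem_iUnion₂.mp (htc hmem)
    have hy' := hts hyt
    have hcy1 : c y ∈ closedBall (0 : H) 1 := hc1 y hy'
    have hcy2 : (A ∘L T) (c y) = y := hc2 y hy'
    refine mem_iUnion₂.mpr ⟨T (c y), mem_image_of_mem _ hyt, ?_⟩
    have hsq : ‖T x - T (c y)‖ ^ 2 ≤ ‖(A ∘L T) x - (A ∘L T) (c y)‖ * ‖x - c y‖ :=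
      adj_dist A x (c y)
    have hd : ‖(A ∘L T) x - (A ∘L T) (c y)‖ < ε ^ 2 / 4 := by
      rw [hcy2, ← dist_eq_norm]
      exact hyd
    have hxcy : ‖x - c y‖ ≤ 2 := by
      have h1 : ‖x‖ ≤ 1 := (by simpa using hx)
      have h2 : ‖c y‖ ≤ 1 := (by simpa using hcy1)
      calc ‖x - c y‖ ≤ ‖x‖ + ‖c y‖ := norm_sub_le _ _
        _ ≤ 2 := by linarith
    have hlt : ‖T x - T (c y)‖ ^ 2 < ε ^ 2 := by
      nlinarith [norm_nonneg ((A ∘L T) x - (A ∘L T) (c y)), norm_nonneg (x - c y),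
        norm_nonneg (T x - T (c y))]
    rw [mem_ball, dist_eq_norm]
    exact lt_of_pow_lt_pow_left₀ 2 hε.le hlt
  have hK : IsCompact (closure ((⇑T) '' closedBall (0 : H) 1)) :=
    tb.closure.isCompact_of_isClosed isClosed_closure
  exact ⟨_, hK, mem_of_superset (closedBall_mem_nhds (0 : H) one_pos)
    fun x hx => subset_closure (mem_image_of_mem _ hx)⟩

/-- If `T i → 1` strongly with `‖T i‖ ≤ 1` eventually, and `A` is compact, then
`T i ∘L A → A` in operator norm. -/
private lemma key_tendsto {ι : Type*} {l : Filter ι} {T : ι → H →L[ℂ] H}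
    (hb : ∀ᶠ i in l, ‖T i‖ ≤ 1)
    (hs : ∀ h : H, Tendsto (fun i => T i h) l (𝓝 h))
    {A : H →L[ℂ] H} (hA : IsCompactOperator (⇑A)) :
    Tendsto (fun i => ‖(T i - 1) ∘L A‖) l (𝓝 0) := by
  rw [NormedAddCommGroup.tendsto_nhds_zero]
  intro ε hε
  have hA' : IsCompactOperator (⇑A.toLinearMap) := hA
  have hcpt : IsCompact (closure ((⇑A.toLinearMap) '' closedBall (0 : H) 1)) :=
    hA'.isCompact_closure_image_closedBall 1
  obtain ⟨s, hsf, hsc⟩ := Metric.totallyBounded_iff.mp hcpt.totallyBounded (ε / 4) (by positivity)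
  have hev : ∀ᶠ i in l, ∀ y ∈ s, ‖T i y - y‖ < ε / 4 := by
    rw [hsf.eventually_all]
    intro y _
    have := Metric.tendsto_nhds.mp (hs y) (ε / 4) (by positivity)
    filter_upwards [this] with i hi
    rw [← dist_eq_norm]
    exact hi
  filter_upwards [hb, hev] with i hbi hevi
  have hle : ‖(T i - 1) ∘L A‖ ≤ 3 * ε / 4 := by
    apply opNorm_le_bound _ (by positivity)
    intro x
    rcases eq_or_ne x 0 with rfl | hx
    · simp
    · have hxn : ‖x‖ ≠ 0 := norm_ne_zero_iff.mpr hx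
      set z : H := ‖x‖⁻¹ • x with hz
      have hzb : z ∈ closedBall (0 : H) 1 := by
        rw [mem_closedBall_iff_norm, sub_zero, hz, norm_smul, norm_inv, norm_norm,
          inv_mul_cancel₀ hxn]
      have hyK : A z ∈ closure ((⇑A.toLinearMap) '' closedBall (0 : H) 1) :=
        subset_closure ⟨z, hzb, rfl⟩
      obtain ⟨y, hys, hyd⟩ := mem_iUnion₂.mp (hsc hyK)
      have hyd' : ‖A z - y‖ < ε / 4 := by rw [← dist_eq_norm]; exact hyd
      have h1 : ‖T i (A z) - A z‖ ≤ 3 * ε / 4 := by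
        have e1 : ‖T i (A z) - T i y‖ ≤ ε / 4 := by
          calc ‖T i (A z) - T i y‖ = ‖T i (A z - y)‖ := by rw [map_sub]
            _ ≤ ‖T i‖ * ‖A z - y‖ := le_opNorm _ _
            _ ≤ 1 * (ε / 4) := mul_le_mul hbi hyd'.le (norm_nonneg _) zero_le_one
            _ = ε / 4 := one_mul _
        have e2 : ‖T i y - y‖ < ε / 4 := hevi y hys
        have e3 : ‖y - A z‖ < ε / 4 := by rw [norm_sub_rev]; exact hyd'
        calc ‖T i (A z) - A z‖ ≤ ‖T i (A z) - T i y‖ + ‖T i y - y‖ + ‖y - A z‖ := by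
              have := dist_triangle4 (T i (A z)) (T i y) y (A z)
              simpa [dist_eq_norm] using this
          _ ≤ 3 * ε / 4 := by linarith
      have hxz : x = ‖x‖ • z := by rw [hz, smul_inv_smul₀ (by simpa using hx)]
      calc ‖((T i - 1) ∘L A) x‖ = ‖((T i - 1) ∘L A) (‖x‖ • z)‖ := by rw [← hxz]
        _ = ‖x‖ * ‖((T i - 1) ∘L A) z‖ := by
            rw [map_smul_of_tower, norm_smul, Real.norm_eq_abs, abs_of_nonneg (norm_nonneg x)]
        _ = ‖x‖ * ‖T i (A z) - A z‖ := by
            simp [ContinuousLinearMap.comp_apply, ContinuousLinearMap.sub_apply]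
        _ ≤ ‖x‖ * (3 * ε / 4) := mul_le_mul_of_nonneg_left h1 (norm_nonneg x)
        _ = 3 * ε / 4 * ‖x‖ := mul_comm _ _
  have hfin : ‖(T i - 1) ∘L A‖ < ε := lt_of_le_of_lt hle (by linarith)
  simpa [abs_of_nonneg (norm_nonneg ((T i - 1) ∘L A))] using hfin

private lemma norm_comp3_le (f g h : H →L[ℂ] H) (hf : ‖f‖ ≤ 1) (hh : ‖h‖ ≤ 1) :
    ‖f ∘L (g ∘L h)‖ ≤ ‖g‖ := by
  calc ‖f ∘L (g ∘L h)‖ ≤ ‖f‖ * ‖g ∘L h‖ := opNorm_comp_le _ _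
    _ ≤ 1 * ‖g ∘L h‖ := mul_le_mul_of_nonneg_right hf (norm_nonneg _)
    _ = ‖g ∘L h‖ := one_mul _
    _ ≤ ‖g‖ * ‖h‖ := opNorm_comp_le _ _
    _ ≤ ‖g‖ * 1 := mul_le_mul_of_nonneg_left hh (norm_nonneg _)
    _ = ‖g‖ := mul_one _

/-- Joint continuity at the endpoint `t = 1`. -/
private lemma endpoint_one
    (u : ℝ → H →L[ℂ] H)
    (hu_iso : ∀ t ∈ Set.Ioc (0 : ℝ) 1, adjoint (u t) ∘L u t = 1)
    (hu_strong : ∀ h : H, Tendsto (fun t => u t h) (𝓝[Set.Ioo (0 : ℝ) 1] 1) (𝓝 h))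
    (v : ℝ → H →L[ℂ] H)
    (hv_iso : ∀ t ∈ Set.Ico (0 : ℝ) 1, adjoint (v t) ∘L v t = 1)
    (G : (H →L[ℂ] H) → ℝ → (H →L[ℂ] H) → (H →L[ℂ] H))
    (hG : ∀ (A B : H →L[ℂ] H), ∀ t ∈ Set.Ioo (0 : ℝ) 1,
      G A t B = t • (u t ∘L A ∘L adjoint (u t)) + (1 - t) • (v t ∘L B ∘L adjoint (v t)))
    (hG1 : ∀ A B : H →L[ℂ] H, G A 1 B = A)
    (A B : H →L[ℂ] H) (hA : IsCompactOperator (⇑A)) :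
    ContinuousWithinAt (fun p : (H →L[ℂ] H) × ℝ × (H →L[ℂ] H) => G p.1 p.2.1 p.2.2)
      (Set.univ ×ˢ Set.Icc (0 : ℝ) 1 ×ˢ Set.univ) (A, 1, B) := by
  have hAd : IsCompactOperator (⇑(adjoint A)) := schauder hA
  have hbu : ∀ᶠ t in 𝓝[Set.Ioo (0 : ℝ) 1] (1 : ℝ), ‖u t‖ ≤ 1 := by
    filter_upwards [eventually_mem_nhdsWithin] with t ht
    exact isom_norm_le (hu_iso t ⟨ht.1, ht.2.le⟩)
  have hk1 := key_tendsto hbu hu_strong hA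
  have hk2 := key_tendsto hbu hu_strong hAd
  rw [ContinuousWithinAt, hG1]
  rw [Metric.tendsto_nhds]
  intro ε hε
  set M : ℝ := ‖A‖ + ‖B‖ + 1 with hM
  have hM0 : 0 < M := by positivity
  set δ : ℝ := min (1 / 2) (ε / (8 * M)) with hδ
  have hδ0 : 0 < δ := lt_min (by norm_num) (by positivity)
  have hδhalf : δ ≤ 1 / 2 := min_le_left _ _
  have hδM : δ * M ≤ ε / 8 := by
    calc δ * M ≤ ε / (8 * M) * M := mul_le_mul_of_nonneg_right (min_le_right _ _) hM0.le
      _ = ε / 8 := by field_simp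
  have hproj1 : Tendsto (fun q : (H →L[ℂ] H) × ℝ × (H →L[ℂ] H) => q.2.1)
      (𝓝[Set.univ ×ˢ Set.Icc (0 : ℝ) 1 ×ˢ Set.univ] (A, 1, B)) (𝓝 1) :=
    ((continuous_fst.comp continuous_snd).tendsto _).mono_left nhdsWithin_le_nhds
  have hprojA : Tendsto (fun q : (H →L[ℂ] H) × ℝ × (H →L[ℂ] H) => q.1)
      (𝓝[Set.univ ×ˢ Set.Icc (0 : ℝ) 1 ×ˢ Set.univ] (A, 1, B)) (𝓝 A) :=
    (continuous_fst.tendsto _).mono_left nhdsWithin_le_nhds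
  have hprojB : Tendsto (fun q : (H →L[ℂ] H) × ℝ × (H →L[ℂ] H) => q.2.2)
      (𝓝[Set.univ ×ˢ Set.Icc (0 : ℝ) 1 ×ˢ Set.univ] (A, 1, B)) (𝓝 B) :=
    ((continuous_snd.comp continuous_snd).tendsto _).mono_left nhdsWithin_le_nhds
  have hbnd : ∀ᶠ t' in 𝓝 (1 : ℝ), t' ∈ Set.Ioo (0 : ℝ) 1 →
      (‖(u t' - 1) ∘L A‖ < ε / 8 ∧ ‖(u t' - 1) ∘L adjoint A‖ < ε / 8) := by
    rw [← eventually_nhdsWithin_iff]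
    exact (Tendsto.eventually_lt_const (by positivity) hk1).and
      (Tendsto.eventually_lt_const (by positivity) hk2)
  filter_upwards [hproj1.eventually hbnd,
      hproj1.eventually (isOpen_ball.eventually_mem (mem_ball_self hδ0)),
      hprojA.eventually (isOpen_ball.eventually_mem (mem_ball_self (show (0:ℝ) < ε/8 by positivity))),
      hprojB.eventually (isOpen_ball.eventually_mem (mem_ball_self one_pos)),
      eventually_mem_nhdsWithin] with q hq1 hq2 hq3 hq4 hq5
  obtain ⟨A', t', B'⟩ := q
  have ht'Icc : t' ∈ Set.Icc (0 : ℝ) 1 := hq5.2.1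
  have habs : |t' - 1| < δ := by simpa [Real.dist_eq] using hq2
  have hlt1 : 1 - t' < δ := by
    have := abs_lt.mp habs; linarith [this.1]
  have ht'half : 1 / 2 < t' := by linarith
  have hA'A : ‖A' - A‖ < ε / 8 := by simpa [dist_eq_norm] using hq3
  have hB'B : ‖B' - B‖ < 1 := by simpa [dist_eq_norm] using hq4
  rcases eq_or_lt_of_le ht'Icc.2 with h1 | h1
  · subst h1
    rw [hG1, dist_eq_norm]
    linarith
  · have ht'Ioo : t' ∈ Set.Ioo (0 : ℝ) 1 := ⟨by linarith, h1⟩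
    obtain ⟨hb1, hb2⟩ := hq1 ht'Ioo
    rw [hG A' B' t' ht'Ioo, dist_eq_norm]
    set w := adjoint (u t') with hw
    set w' := adjoint (v t') with hw'
    have hui := hu_iso t' ⟨ht'Ioo.1, ht'Ioo.2.le⟩
    have hvi := hv_iso t' ⟨by linarith, ht'Ioo.2⟩
    have hun : ‖u t'‖ ≤ 1 := isom_norm_le hui
    have hwn : ‖w‖ ≤ 1 := isom_adjoint_norm_le hui
    have hvn : ‖v t'‖ ≤ 1 := isom_norm_le hvi
    have hw'n : ‖w'‖ ≤ 1 := isom_adjoint_norm_le hvi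
    have hid : t' • (u t' ∘L A' ∘L w) + (1 - t') • (v t' ∘L B' ∘L w') - A
        = t' • (u t' ∘L ((A' - A) ∘L w)) + t' • ((u t' - 1) ∘L (A ∘L w))
          + t' • (A ∘L (w - 1)) + (t' - 1) • A + (1 - t') • (v t' ∘L B' ∘L w') := by
      simp only [ContinuousLinearMap.comp_sub, ContinuousLinearMap.sub_comp,
        ContinuousLinearMap.one_def, ContinuousLinearMap.id_comp, ContinuousLinearMap.comp_id]
      module
    rw [hid]
    have n1 : ‖t' • (u t' ∘L ((A' - A) ∘L w))‖ ≤ ε / 8 := by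
      rw [norm_smul, Real.norm_eq_abs, abs_of_nonneg (by linarith : (0:ℝ) ≤ t')]
      have h3 := norm_comp3_le (u t') (A' - A) w hun hwn
      nlinarith [norm_nonneg (u t' ∘L ((A' - A) ∘L w))]
    have n2 : ‖t' • ((u t' - 1) ∘L (A ∘L w))‖ ≤ ε / 8 := by
      rw [norm_smul, Real.norm_eq_abs, abs_of_nonneg (by linarith : (0:ℝ) ≤ t')]
      have h3 : ‖(u t' - 1) ∘L (A ∘L w)‖ ≤ ‖(u t' - 1) ∘L A‖ := by
        rw [← ContinuousLinearMap.comp_assoc]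
        calc ‖((u t' - 1) ∘L A) ∘L w‖ ≤ ‖(u t' - 1) ∘L A‖ * ‖w‖ := opNorm_comp_le _ _
          _ ≤ ‖(u t' - 1) ∘L A‖ * 1 := mul_le_mul_of_nonneg_left hwn (norm_nonneg _)
          _ = ‖(u t' - 1) ∘L A‖ := mul_one _
      nlinarith [norm_nonneg ((u t' - 1) ∘L (A ∘L w))]
    have n3 : ‖t' • (A ∘L (w - 1))‖ ≤ ε / 8 := by
      rw [norm_smul, Real.norm_eq_abs, abs_of_nonneg (by linarith : (0:ℝ) ≤ t')]
      have hadj : ‖A ∘L (w - 1)‖ = ‖(u t' - 1) ∘L adjoint A‖ := by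
        have e1 : adjoint (A ∘L (w - 1)) = (u t' - 1) ∘L adjoint A := by
          rw [adjoint_comp]
          congr 1
          rw [map_sub, hw, adjoint_adjoint]
          congr 1
          rw [ContinuousLinearMap.one_def, adjoint_id]
        calc ‖A ∘L (w - 1)‖ = ‖adjoint (A ∘L (w - 1))‖ :=
              (LinearIsometryEquiv.norm_map adjoint (A ∘L (w - 1))).symm
          _ = ‖(u t' - 1) ∘L adjoint A‖ := by rw [e1]
      rw [hadj] at *
      nlinarith [norm_nonneg ((u t' - 1) ∘L adjoint A)]
    have n4 : ‖(t' - 1) • A‖ ≤ ε / 8 := by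
      rw [norm_smul, Real.norm_eq_abs, abs_of_nonpos (by linarith : t' - 1 ≤ 0), neg_sub]
      have hAM : ‖A‖ ≤ M := by
        rw [hM]; linarith [norm_nonneg B]
      calc (1 - t') * ‖A‖ ≤ δ * M :=
            mul_le_mul hlt1.le hAM (norm_nonneg A) hδ0.le
        _ ≤ ε / 8 := hδM
    have n5 : ‖(1 - t') • (v t' ∘L B' ∘L w')‖ ≤ ε / 8 := by
      rw [norm_smul, Real.norm_eq_abs, abs_of_nonneg (by linarith : (0:ℝ) ≤ 1 - t')]
      have hB'M : ‖v t' ∘L B' ∘L w'‖ ≤ M := by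
        have h3 := norm_comp3_le (v t') B' w' hvn hw'n
        have h4 : ‖B'‖ ≤ ‖B‖ + ‖B' - B‖ := norm_le_norm_add_norm_sub' _ _
        rw [hM]; linarith [norm_nonneg A]
      calc (1 - t') * ‖v t' ∘L B' ∘L w'‖ ≤ δ * M :=
            mul_le_mul hlt1.le hB'M (norm_nonneg _) hδ0.le
        _ ≤ ε / 8 := hδM
    have h12 := norm_add_le (t' • (u t' ∘L ((A' - A) ∘L w))) (t' • ((u t' - 1) ∘L (A ∘L w)))
    have h123 := norm_add_le (t' • (u t' ∘L ((A' - A) ∘L w)) + t' • ((u t' - 1) ∘L (A ∘L w)))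
      (t' • (A ∘L (w - 1)))
    have h1234 := norm_add_le (t' • (u t' ∘L ((A' - A) ∘L w)) + t' • ((u t' - 1) ∘L (A ∘L w))
      + t' • (A ∘L (w - 1))) ((t' - 1) • A)
    have h12345 := norm_add_le (t' • (u t' ∘L ((A' - A) ∘L w)) + t' • ((u t' - 1) ∘L (A ∘L w))
      + t' • (A ∘L (w - 1)) + (t' - 1) • A) ((1 - t') • (v t' ∘L B' ∘L w'))
    linarith

end Aux

/-- The canonical homotopy `(A, t, B) ↦ t • (u t A u t*) + (1 - t) • (v t B v t*)`
(extended by `B` at `t = 0` and by `A` at `t = 1`) is a jointly norm-continuous map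
`K(H) × [0,1] × K(H) → K(H)`. -/
theorem stmt16 {H : Type*} [NormedAddCommGroup H] [InnerProductSpace ℂ H]
    [CompleteSpace H] [TopologicalSpace.SeparableSpace H]
    (_hinf : ¬FiniteDimensional ℂ H)
    (u : ℝ → H →L[ℂ] H)
    (hu_iso : ∀ t ∈ Set.Ioc (0 : ℝ) 1, adjoint (u t) ∘L u t = 1)
    (hu_one : u 1 = 1)
    (hu_cont : ContinuousOn u (Set.Ioo 0 1))
    (hu_strong : ∀ h : H, Tendsto (fun t => u t h) (nhdsWithin 1 (Set.Ioo (0 : ℝ) 1)) (nhds h))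
    (v : ℝ → H →L[ℂ] H)
    (hv_iso : ∀ t ∈ Set.Ico (0 : ℝ) 1, adjoint (v t) ∘L v t = 1)
    (hv_zero : v 0 = 1)
    (hv_cont : ContinuousOn v (Set.Ioo 0 1))
    (hv_strong : ∀ h : H, Tendsto (fun t => v t h) (nhdsWithin 0 (Set.Ioo (0 : ℝ) 1)) (nhds h))
    (G : (H →L[ℂ] H) → ℝ → (H →L[ℂ] H) → (H →L[ℂ] H))
    (hG : ∀ (A B : H →L[ℂ] H), ∀ t ∈ Set.Ioo (0 : ℝ) 1,
      G A t B = t • (u t ∘L A ∘L adjoint (u t)) + (1 - t) • (v t ∘L B ∘L adjoint (v t)))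
    (hG0 : ∀ A B : H →L[ℂ] H, G A 0 B = B)
    (hG1 : ∀ A B : H →L[ℂ] H, G A 1 B = A) :
    (∀ A B : H →L[ℂ] H, IsCompactOperator (⇑A) → IsCompactOperator (⇑B) →
      ∀ t ∈ Set.Icc (0 : ℝ) 1, IsCompactOperator (⇑(G A t B))) ∧
    ContinuousOn (fun p : (H →L[ℂ] H) × ℝ × (H →L[ℂ] H) => G p.1 p.2.1 p.2.2)
      ({A : H →L[ℂ] H | IsCompactOperator (⇑A)} ×ˢ
        (Set.Icc (0 : ℝ) 1 ×ˢ {B : H →L[ℂ] H | IsCompactOperator (⇑B)})) := by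
  constructor
  · intro A B hA hB t ht
    rcases eq_or_lt_of_le ht.1 with h0 | h0
    · rw [← h0, hG0]; exact hB
    rcases eq_or_lt_of_le ht.2 with h1 | h1
    · rw [h1, hG1]; exact hA
    · have hIoo : t ∈ Set.Ioo (0 : ℝ) 1 := ⟨h0, h1⟩
      have hfun : (⇑(G A t B) : H → H)
          = (t • (⇑(u t) ∘ ⇑A ∘ ⇑(adjoint (u t))))
            + ((1 - t) • (⇑(v t) ∘ ⇑B ∘ ⇑(adjoint (v t)))) := by
        rw [hG A B t hIoo]; rfl
      rw [hfun]
      exact (((hA.comp_clm (adjoint (u t))).clm_comp (u t)).smul t).add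
        (((hB.comp_clm (adjoint (v t))).clm_comp (v t)).smul (1 - t))
  · rintro ⟨A, t, B⟩ ⟨hA, ht, hB⟩
    have hmono : ({A : H →L[ℂ] H | IsCompactOperator (⇑A)} ×ˢ
        (Set.Icc (0 : ℝ) 1 ×ˢ {B : H →L[ℂ] H | IsCompactOperator (⇑B)}))
        ⊆ (Set.univ ×ˢ Set.Icc (0 : ℝ) 1 ×ˢ Set.univ) :=
      fun q hq => ⟨Set.mem_univ _, hq.2.1, Set.mem_univ _⟩
    rcases eq_or_lt_of_le ht.1 with h0 | h0
    · -- t = 0 : reduce to the endpoint lemma applied to the "time-reversed" homotopy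
      have h0' : t = 0 := h0.symm
      subst h0'
      have hu'_iso : ∀ s ∈ Set.Ioc (0 : ℝ) 1, adjoint (v (1 - s)) ∘L v (1 - s) = 1 :=
        fun s hs => hv_iso (1 - s) ⟨by linarith [hs.2], by linarith [hs.1]⟩
      have hmapt : Tendsto (fun s : ℝ => 1 - s) (𝓝[Set.Ioo (0 : ℝ) 1] 1)
          (𝓝[Set.Ioo (0 : ℝ) 1] 0) := by
        apply tendsto_nhdsWithin_of_tendsto_nhds_of_eventually_within
        · have : Tendsto (fun s : ℝ => 1 - s) (𝓝 1) (𝓝 (1 - 1)) :=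
            tendsto_const_nhds.sub tendsto_id
          simpa using this.mono_left nhdsWithin_le_nhds
        · filter_upwards [eventually_mem_nhdsWithin] with s hs
          exact ⟨by linarith [hs.2], by linarith [hs.1]⟩
      have hu'_strong : ∀ h : H, Tendsto (fun s => v (1 - s) h)
          (𝓝[Set.Ioo (0 : ℝ) 1] 1) (𝓝 h) := fun h => (hv_strong h).comp hmapt
      have hv'_iso : ∀ s ∈ Set.Ico (0 : ℝ) 1, adjoint (u (1 - s)) ∘L u (1 - s) = 1 :=
        fun s hs => hu_iso (1 - s) ⟨by linarith [hs.2], by linarith [hs.1]⟩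
      have hG' : ∀ (A' B' : H →L[ℂ] H), ∀ s ∈ Set.Ioo (0 : ℝ) 1,
          G B' (1 - s) A' = s • (v (1 - s) ∘L A' ∘L adjoint (v (1 - s)))
            + (1 - s) • (u (1 - s) ∘L B' ∘L adjoint (u (1 - s))) := by
        intro A' B' s hs
        rw [hG B' A' (1 - s) ⟨by linarith [hs.2], by linarith [hs.1]⟩,
          show (1 - (1 - s)) = s by ring]
        exact add_comm _ _
      have hG'1 : ∀ A' B' : H →L[ℂ] H, G B' (1 - 1) A' = A' := by
        intro A' B'
        rw [show (1 : ℝ) - 1 = 0 by norm_num, hG0]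
      have hend := endpoint_one (fun s => v (1 - s)) hu'_iso hu'_strong
        (fun s => u (1 - s)) hv'_iso (fun A' s B' => G B' (1 - s) A') hG' hG'1 B A hB
      have hφ : Continuous (fun q : (H →L[ℂ] H) × ℝ × (H →L[ℂ] H) =>
          ((q.2.2, 1 - q.2.1, q.1) : (H →L[ℂ] H) × ℝ × (H →L[ℂ] H))) := by
        fun_prop
      have hmaps : Set.MapsTo (fun q : (H →L[ℂ] H) × ℝ × (H →L[ℂ] H) =>
          ((q.2.2, 1 - q.2.1, q.1) : (H →L[ℂ] H) × ℝ × (H →L[ℂ] H)))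
          (Set.univ ×ˢ Set.Icc (0 : ℝ) 1 ×ˢ Set.univ)
          (Set.univ ×ˢ Set.Icc (0 : ℝ) 1 ×ˢ Set.univ) := by
        intro q hq
        simp only [Set.mem_prod, Set.mem_univ, Set.mem_Icc, true_and, and_true] at hq ⊢
        constructor <;> linarith
      have hend' : ContinuousWithinAt
          (fun p : (H →L[ℂ] H) × ℝ × (H →L[ℂ] H) => G p.2.2 (1 - p.2.1) p.1)
          (Set.univ ×ˢ Set.Icc (0 : ℝ) 1 ×ˢ Set.univ) (B, 1, A) := hend
      have hcomp := ContinuousWithinAt.comp (x := ((A, 0, B) : (H →L[ℂ] H) × ℝ × (H →L[ℂ] H)))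
        (t := Set.univ ×ˢ Set.Icc (0 : ℝ) 1 ×ˢ Set.univ) (f := fun q : (H →L[ℂ] H) × ℝ × (H →L[ℂ] H) =>
          ((q.2.2, 1 - q.2.1, q.1) : (H →L[ℂ] H) × ℝ × (H →L[ℂ] H)))
        (by rw [show ((B, 1, A) : (H →L[ℂ] H) × ℝ × (H →L[ℂ] H))
              = ((B, 1 - 0, A) : (H →L[ℂ] H) × ℝ × (H →L[ℂ] H)) by norm_num] at hend'
            exact hend')
        (hφ.continuousWithinAt) hmaps
      have hfe : ((fun p : (H →L[ℂ] H) × ℝ × (H →L[ℂ] H) => G p.2.2 (1 - p.2.1) p.1) ∘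
          (fun q : (H →L[ℂ] H) × ℝ × (H →L[ℂ] H) =>
            ((q.2.2, 1 - q.2.1, q.1) : (H →L[ℂ] H) × ℝ × (H →L[ℂ] H))))
          = fun q : (H →L[ℂ] H) × ℝ × (H →L[ℂ] H) => G q.1 q.2.1 q.2.2 := by
        funext q
        simp [Function.comp, sub_sub_cancel]
      rw [hfe] at hcomp
      exact hcomp.mono hmono
    rcases eq_or_lt_of_le ht.2 with h1 | h1
    · subst h1
      exact (endpoint_one u hu_iso hu_strong v hv_iso G hG hG1 A B hA).mono hmono
    · -- interior case
      have hIoo : t ∈ Set.Ioo (0 : ℝ) 1 := ⟨h0, h1⟩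
      have hut : ContinuousAt u t := hu_cont.continuousAt (isOpen_Ioo.mem_nhds hIoo)
      have hvt : ContinuousAt v t := hv_cont.continuousAt (isOpen_Ioo.mem_nhds hIoo)
      have hadj : Continuous (fun T : H →L[ℂ] H => adjoint T) :=
        (adjoint : (H →L[ℂ] H) ≃ₗᵢ⋆[ℂ] (H →L[ℂ] H)).continuous
      have hproj : ContinuousAt (fun q : (H →L[ℂ] H) × ℝ × (H →L[ℂ] H) => q.2.1) (A, t, B) :=
        (continuous_fst.comp continuous_snd).continuousAt
      have hprojA : ContinuousAt (fun q : (H →L[ℂ] H) × ℝ × (H →L[ℂ] H) => q.1) (A, t, B) :=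
        continuous_fst.continuousAt
      have hprojB : ContinuousAt (fun q : (H →L[ℂ] H) × ℝ × (H →L[ℂ] H) => q.2.2) (A, t, B) :=
        (continuous_snd.comp continuous_snd).continuousAt
      have hcompAt : ∀ (f g : (H →L[ℂ] H) × ℝ × (H →L[ℂ] H) → H →L[ℂ] H),
          ContinuousAt f (A, t, B) → ContinuousAt g (A, t, B) →
          ContinuousAt (fun y => (f y) ∘L (g y)) (A, t, B) := fun f g hf hg =>
        hf.clm_comp hg
      have hF : ContinuousAt (fun q : (H →L[ℂ] H) × ℝ × (H →L[ℂ] H) =>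
          q.2.1 • (u q.2.1 ∘L q.1 ∘L adjoint (u q.2.1))
            + (1 - q.2.1) • (v q.2.1 ∘L q.2.2 ∘L adjoint (v q.2.1))) (A, t, B) := by
        apply ContinuousAt.add
        · exact hproj.smul (hcompAt _ _ (hut.comp hproj)
            (hcompAt _ _ hprojA ((hadj.continuousAt).comp (hut.comp hproj))))
        · exact (continuousAt_const.sub hproj).smul (hcompAt _ _ (hvt.comp hproj)
            (hcompAt _ _ hprojB ((hadj.continuousAt).comp (hvt.comp hproj))))
      have hevIoo : ∀ᶠ q in 𝓝[({A : H →L[ℂ] H | IsCompactOperator (⇑A)} ×ˢ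
          (Set.Icc (0 : ℝ) 1 ×ˢ {B : H →L[ℂ] H | IsCompactOperator (⇑B)}))] (A, t, B),
          q.2.1 ∈ Set.Ioo (0 : ℝ) 1 :=
        mem_nhdsWithin_of_mem_nhds
          (hproj.preimage_mem_nhds (isOpen_Ioo.mem_nhds hIoo))
      apply (hF.continuousWithinAt).congr_of_eventuallyEq
      · filter_upwards [hevIoo] with q hq
        exact hG q.1 q.2.2 q.2.1 hq
      · exact hG A B t hIoo
end
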